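/- Let D > 0 and let δ satisfy D ≤ δ < 2D. Let P be the temporal-sampling of length 2 in ℝ (with the usual metric) given by P(1) = P(2) = {0, D, 2D, 3D, 4D}. Then: (i) P admits a temporal (5,0,δ)-median-clustering; and (ii) there exists a set 𝒞 of 5 trajectories of P with δ(𝒞) ≤ δ and rad₁(𝒞) = D such that for every τ ∈ 𝒞 and every trajectory σ ∈ 𝒯_δ(P), rad₁((𝒞 ∖ {τ}) ∪ {σ}) ≥ rad₁(𝒞); that is, 𝒞 is a local minimum of local search with single-trajectory swaps, while the optimal rad₁ cost with 5 clusters is 0. -/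

import Mathlib

/-- `τ` is a trajectory of the temporal-sampling `P` of length `t`:
a choice of a point `τ i ∈ P i` in every level. -/
def IsTrajectory {X : Type*} [MetricSpace X] {t : ℕ} (P : Fin t → Finset X)
    (τ : Fin t → X) : Prop :=
  ∀ i, τ i ∈ P i

/-- The displacement of the trajectory `τ` is at most `δ`, i.e.
`max_{1 ≤ i ≤ t-1} d(τ(i), τ(i+1)) ≤ δ` (vacuously true when `t = 1`, given `δ ≥ 0`). -/
def DispLE {X : Type*} [MetricSpace X] {t : ℕ} (τ : Fin t → X) (δ : ℝ) : Prop :=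
  ∀ (i : ℕ) (h : i + 1 < t),
    dist (τ ⟨i, Nat.lt_of_succ_lt h⟩) (τ ⟨i + 1, h⟩) ≤ δ

/-- `𝒞` is a temporal `(k,r,δ)`-clustering of the temporal-sampling `P`:
a nonempty finite set of at most `k` trajectories of `P`, with `rad∞(𝒞) ≤ r`
and `δ(𝒞) ≤ δ`. -/
def IsTemporalClustering {X : Type*} [MetricSpace X] {t : ℕ} (P : Fin t → Finset X)
    (𝒞 : Set (Fin t → X)) (k : ℕ) (r δ : ℝ) : Prop :=
  𝒞.Nonempty ∧ 𝒞.Finite ∧ 𝒞.ncard ≤ k ∧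
  (∀ τ ∈ 𝒞, IsTrajectory P τ) ∧
  (∀ i : Fin t, ∀ p ∈ P i, ∃ τ ∈ 𝒞, dist p (τ i) ≤ r) ∧
  (∀ τ ∈ 𝒞, DispLE τ δ)

/-- `C` is an `s`-net of the finite set `S`: a subset of `S` whose points are pairwise
at distance `> s` and such that every point of `S` is within distance `s` of `C`. -/
def IsNet {X : Type*} [MetricSpace X] (s : ℝ) (S C : Finset X) : Prop :=
  C ⊆ S ∧ (∀ x ∈ C, ∀ y ∈ C, x ≠ y → s < dist x y) ∧
  (∀ p ∈ S, ∃ c ∈ C, dist p c ≤ s)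

/-- `cost(i;𝒞) = Σ_{p ∈ P i} min_{τ ∈ 𝒞} d(p, τ i)`, the level-`i` median cost of the
set of trajectories `𝒞` (the infimum is the minimum for `𝒞` finite and nonempty). -/
noncomputable def levelCost {X : Type*} [MetricSpace X] {t : ℕ} (P : Fin t → Finset X)
    (𝒞 : Set (Fin t → X)) (i : Fin t) : ℝ :=
  ∑ p ∈ P i, ⨅ τ : 𝒞, dist p ((τ : Fin t → X) i)

/-- `𝒞` is a temporal `(k,r,δ)`-median-clustering of `P`: a nonempty finite set of at
most `k` trajectories of `P` with `rad₁(𝒞) ≤ r` and `δ(𝒞) ≤ δ`. -/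
def IsTemporalMedianClustering {X : Type*} [MetricSpace X] {t : ℕ} (P : Fin t → Finset X)
    (𝒞 : Set (Fin t → X)) (k : ℕ) (r δ : ℝ) : Prop :=
  𝒞.Nonempty ∧ 𝒞.Finite ∧ 𝒞.ncard ≤ k ∧
  (∀ τ ∈ 𝒞, IsTrajectory P τ) ∧
  (∀ i : Fin t, levelCost P 𝒞 i ≤ r) ∧
  (∀ τ ∈ 𝒞, DispLE τ δ)

/-- The potential `W(𝒞) = Σ_{i=1}^t max(0, cost(i;𝒞) − r)`. -/
noncomputable def Wpot {X : Type*} [MetricSpace X] {t : ℕ} (P : Fin t → Finset X)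
    (r : ℝ) (𝒞 : Set (Fin t → X)) : ℝ :=
  ∑ i : Fin t, max 0 (levelCost P 𝒞 i - r)

/-- `rad₁(𝒞) = max_{1 ≤ i ≤ t} Σ_{p ∈ P i} min_{τ ∈ 𝒞} d(p, τ i)`. -/
noncomputable def rad1 {X : Type*} [MetricSpace X] {t : ℕ} (P : Fin t → Finset X)
    (𝒞 : Set (Fin t → X)) : ℝ :=
  ⨆ i : Fin t, levelCost P 𝒞 i

/- ### Auxiliary definitions and lemmas -/

/-- The trajectory of length 2 visiting `a` then `b`. -/
def pairF (a b : ℝ) : Fin 2 → ℝ := ![a, b]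

@[simp] lemma pairF_zero (a b : ℝ) : pairF a b 0 = a := rfl
@[simp] lemma pairF_one (a b : ℝ) : pairF a b 1 = b := rfl

lemma pairF_inj {a b c d : ℝ} (h : pairF a b = pairF c d) : a = c ∧ b = d :=
  ⟨congrFun h 0, congrFun h 1⟩

lemma ncard_insert_le' {α : Type*} (a : α) (s : Set α) {n : ℕ} (h : s.ncard ≤ n) :
    (insert a s).ncard ≤ n + 1 := (Set.ncard_insert_le a s).trans (by omega)

lemma grid_mem_iff (D a : ℝ) :
    a ∈ ({0, D, 2 * D, 3 * D, 4 * D} : Finset ℝ) ↔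
      a = 0 ∨ a = D ∨ a = 2 * D ∨ a = 3 * D ∨ a = 4 * D := by
  simp [Finset.mem_insert, Finset.mem_singleton]

lemma grid_sep (D : ℝ) (hD : 0 < D) (a b : ℝ)
    (ha : a ∈ ({0, D, 2 * D, 3 * D, 4 * D} : Finset ℝ))
    (hb : b ∈ ({0, D, 2 * D, 3 * D, 4 * D} : Finset ℝ)) (hne : a ≠ b) :
    D ≤ dist a b := by
  rw [grid_mem_iff] at ha hb
  rw [Real.dist_eq, le_abs]
  rcases ha with rfl|rfl|rfl|rfl|rfl <;> rcases hb with rfl|rfl|rfl|rfl|rfl <;>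
    first
      | (exact absurd rfl hne)
      | (left; linarith)
      | (right; linarith)

lemma grid_near (D : ℝ) (hD : 0 < D) (a b : ℝ)
    (ha : a ∈ ({0, D, 2 * D, 3 * D, 4 * D} : Finset ℝ))
    (hb : b ∈ ({0, D, 2 * D, 3 * D, 4 * D} : Finset ℝ)) (hab : dist a b < 2 * D) :
    dist a b ≤ D := by
  rw [grid_mem_iff] at ha hb
  rw [Real.dist_eq] at hab ⊢
  rw [abs_lt] at hab
  rw [abs_le]
  obtain ⟨h1, h2⟩ := hab
  rcases ha with rfl|rfl|rfl|rfl|rfl <;> rcases hb with rfl|rfl|rfl|rfl|rfl <;>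
    constructor <;> linarith

lemma bddBelow_dist' {X : Type*} [MetricSpace X] {t : ℕ} (𝒞 : Set (Fin t → X)) (p : X)
    (i : Fin t) :
    BddBelow (Set.range fun τ : 𝒞 => dist p ((τ : Fin t → X) i)) :=
  ⟨0, by rintro _ ⟨τ, rfl⟩; exact dist_nonneg⟩

lemma levelCost_le_sum {X : Type*} [MetricSpace X] {t : ℕ} (P : Fin t → Finset X)
    (𝒞 : Set (Fin t → X)) (i : Fin t) (g : X → ℝ)
    (h : ∀ p ∈ P i, ∃ τ ∈ 𝒞, dist p (τ i) ≤ g p) :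
    levelCost P 𝒞 i ≤ ∑ p ∈ P i, g p := by
  apply Finset.sum_le_sum
  intro p hp
  obtain ⟨τ, hτ, hd⟩ := h p hp
  exact le_trans (ciInf_le (bddBelow_dist' 𝒞 p i) ⟨τ, hτ⟩) hd

lemma sum_le_levelCost {X : Type*} [MetricSpace X] {t : ℕ} (P : Fin t → Finset X)
    (𝒞 : Set (Fin t → X)) (h𝒞 : 𝒞.Nonempty) (i : Fin t) (g : X → ℝ)
    (h : ∀ p ∈ P i, ∀ τ ∈ 𝒞, g p ≤ dist p (τ i)) :
    ∑ p ∈ P i, g p ≤ levelCost P 𝒞 i := by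
  have : Nonempty 𝒞 := h𝒞.to_subtype
  apply Finset.sum_le_sum
  intro p hp
  exact le_ciInf fun τ => h p hp τ τ.2

lemma levelCost_le_rad1 {X : Type*} [MetricSpace X] {t : ℕ} (P : Fin t → Finset X)
    (𝒞 : Set (Fin t → X)) (i : Fin t) : levelCost P 𝒞 i ≤ rad1 P 𝒞 :=
  le_ciSup (Set.Finite.bddAbove (Set.finite_range _)) i

lemma rad1_le {X : Type*} [MetricSpace X] {t : ℕ} [NeZero t] (P : Fin t → Finset X)
    (𝒞 : Set (Fin t → X)) (r : ℝ) (h : ∀ i, levelCost P 𝒞 i ≤ r) : rad1 P 𝒞 ≤ r :=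
  ciSup_le h

lemma levelCost_ge_of_miss (D : ℝ) (hD : 0 < D) (P : Fin 2 → Finset ℝ)
    (hPdef : ∀ i, P i = {0, D, 2 * D, 3 * D, 4 * D}) (𝒞 : Set (Fin 2 → ℝ))
    (h𝒞 : 𝒞.Nonempty) (htraj : ∀ τ ∈ 𝒞, IsTrajectory P τ) (i : Fin 2) (p₀ : ℝ)
    (hp₀ : p₀ ∈ P i) (hmiss : ∀ τ ∈ 𝒞, τ i ≠ p₀) : D ≤ levelCost P 𝒞 i := by
  have h := sum_le_levelCost P 𝒞 h𝒞 i (fun p => if p = p₀ then D else 0) ?_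
  · rw [Finset.sum_ite_eq' (P i) p₀ (fun _ => D), if_pos hp₀] at h
    exact h
  · intro p hp τ hτ
    split_ifs with hpp
    · subst hpp
      refine grid_sep D hD p (τ i) ?_ ?_ ?_
      · rw [hPdef i] at hp; exact hp
      · have := htraj τ hτ i; rwa [hPdef i] at this
      · exact fun h => hmiss τ hτ h.symm
    · exact dist_nonneg


/-- The local-search solution: five trajectories shifted by one step. -/
def LS (D : ℝ) : Set (Fin 2 → ℝ) :=
  {pairF 0 0, pairF 0 D, pairF D (2*D), pairF (2*D) (3*D), pairF (3*D) (4*D)}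

lemma LS_mem {D : ℝ} {τ : Fin 2 → ℝ} (hτ : τ ∈ LS D) :
    τ = pairF 0 0 ∨ τ = pairF 0 D ∨ τ = pairF D (2*D) ∨ τ = pairF (2*D) (3*D) ∨
      τ = pairF (3*D) (4*D) := by
  simpa only [LS, Set.mem_insert_iff, Set.mem_singleton_iff] using hτ

lemma LS_mem' {D : ℝ} {τ : Fin 2 → ℝ}
    (hτ : τ = pairF 0 0 ∨ τ = pairF 0 D ∨ τ = pairF D (2*D) ∨ τ = pairF (2*D) (3*D) ∨
      τ = pairF (3*D) (4*D)) : τ ∈ LS D := by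
  simpa only [LS, Set.mem_insert_iff, Set.mem_singleton_iff] using hτ

lemma LS_nonempty (D : ℝ) : (LS D).Nonempty := ⟨pairF 0 0, by left; rfl⟩

lemma LS_finite (D : ℝ) : (LS D).Finite := by rw [LS]; exact Set.toFinite _

lemma LS_traj (D : ℝ) (P : Fin 2 → Finset ℝ)
    (hPdef : ∀ i, P i = {0, D, 2 * D, 3 * D, 4 * D}) :
    ∀ τ ∈ LS D, IsTrajectory P τ := by
  intro τ hτ i
  rcases LS_mem hτ with rfl|rfl|rfl|rfl|rfl <;>
    (rw [hPdef i, grid_mem_iff]; fin_cases i <;> simp)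

lemma LS_rad (D : ℝ) (hD : 0 < D) (P : Fin 2 → Finset ℝ)
    (hPdef : ∀ i, P i = {0, D, 2 * D, 3 * D, 4 * D}) :
    rad1 P (LS D) = D := by
  have hlow : D ≤ levelCost P (LS D) 0 := by
    refine levelCost_ge_of_miss D hD P hPdef _ (LS_nonempty D) (LS_traj D P hPdef) 0 (4*D)
      (by rw [hPdef, grid_mem_iff]; tauto) ?_
    intro τ hτ
    rcases LS_mem hτ with rfl|rfl|rfl|rfl|rfl <;>
      (simp only [pairF_zero]; intro h; linarith)
  have hup : ∀ i, levelCost P (LS D) i ≤ D := by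
    intro i
    fin_cases i
    · have h := levelCost_le_sum P (LS D) 0 (fun p => if p = 4*D then D else 0) ?_
      · rw [Finset.sum_ite_eq' (P 0) (4*D) (fun _ => D),
          if_pos (by rw [hPdef, grid_mem_iff]; tauto)] at h
        exact h
      · intro p hp
        rw [hPdef 0, grid_mem_iff] at hp
        rcases hp with h|h|h|h|h
        · exact ⟨pairF 0 0, LS_mem' (by tauto),
            by rw [h, if_neg (by intro h'; linarith)]; simp⟩
        · exact ⟨pairF D (2*D), LS_mem' (by tauto),
            by rw [h, if_neg (by intro h'; linarith)]; simp⟩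
        · exact ⟨pairF (2*D) (3*D), LS_mem' (by tauto),
            by rw [h, if_neg (by intro h'; linarith)]; simp⟩
        · exact ⟨pairF (3*D) (4*D), LS_mem' (by tauto),
            by rw [h, if_neg (by intro h'; linarith)]; simp⟩
        · refine ⟨pairF (3*D) (4*D), LS_mem' (by tauto), ?_⟩
          rw [h, if_pos rfl]
          simp only [pairF_zero]
          rw [Real.dist_eq, abs_le]
          constructor <;> linarith
    · refine le_trans (levelCost_le_sum P _ 1 (fun _ => (0:ℝ)) ?_) (by simp; linarith)
      intro p hp
      rw [hPdef 1, grid_mem_iff] at hp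
      rcases hp with h|h|h|h|h
      · exact ⟨pairF 0 0, LS_mem' (by tauto), by rw [h]; simp⟩
      · exact ⟨pairF 0 D, LS_mem' (by tauto), by rw [h]; simp⟩
      · exact ⟨pairF D (2*D), LS_mem' (by tauto), by rw [h]; simp⟩
      · exact ⟨pairF (2*D) (3*D), LS_mem' (by tauto), by rw [h]; simp⟩
      · exact ⟨pairF (3*D) (4*D), LS_mem' (by tauto), by rw [h]; simp⟩
  exact le_antisymm (rad1_le P _ D hup) (le_trans hlow (levelCost_le_rad1 P _ 0))

set_option maxHeartbeats 2000000 in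
theorem statement16 (D δ : ℝ) (hD : 0 < D) (hδ₁ : D ≤ δ) (hδ₂ : δ < 2 * D)
    (P : Fin 2 → Finset ℝ) (hPdef : ∀ i, P i = {0, D, 2 * D, 3 * D, 4 * D}) :
    (∃ 𝒞 : Set (Fin 2 → ℝ), IsTemporalMedianClustering P 𝒞 5 0 δ) ∧
    (∃ 𝒞 : Set (Fin 2 → ℝ),
      𝒞.Finite ∧ 𝒞.ncard = 5 ∧
      (∀ τ ∈ 𝒞, IsTrajectory P τ ∧ DispLE τ δ) ∧
      rad1 P 𝒞 = D ∧
      (∀ τ ∈ 𝒞, ∀ σ : Fin 2 → ℝ, IsTrajectory P σ → DispLE σ δ →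
        rad1 P 𝒞 ≤ rad1 P ((𝒞 \ {τ}) ∪ {σ}))) := by
  constructor
  · -- Part (i): the five constant trajectories give cost 0.
    refine ⟨{pairF 0 0, pairF D D, pairF (2*D) (2*D), pairF (3*D) (3*D), pairF (4*D) (4*D)},
      ⟨pairF 0 0, by left; rfl⟩, Set.toFinite _, ?_, ?_, ?_, ?_⟩
    · refine ncard_insert_le' _ _ (ncard_insert_le' _ _ (ncard_insert_le' _ _
        (ncard_insert_le' _ _ (le_of_eq (Set.ncard_singleton _)))))
    · intro τ hτ i
      simp only [Set.mem_insert_iff, Set.mem_singleton_iff] at hτ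
      rcases hτ with rfl|rfl|rfl|rfl|rfl <;>
        (rw [hPdef i, grid_mem_iff]; fin_cases i <;> simp)
    · intro i
      refine le_trans (levelCost_le_sum P _ i (fun _ => (0:ℝ)) ?_) (by simp)
      intro p hp
      rw [hPdef i, grid_mem_iff] at hp
      refine ⟨pairF p p, ?_, by fin_cases i <;> simp⟩
      rcases hp with h|h|h|h|h <;> rw [h] <;>
        simp [Set.mem_insert_iff, Set.mem_singleton_iff]
    · intro τ hτ i hi
      have hi0 : i = 0 := by omega
      subst hi0
      have e : (⟨0 + 1, hi⟩ : Fin 2) = 1 := rfl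
      simp only [Set.mem_insert_iff, Set.mem_singleton_iff] at hτ
      rcases hτ with rfl|rfl|rfl|rfl|rfl <;>
        (simp only [e, Fin.mk_zero, pairF_zero, pairF_one, dist_self]; linarith)
  · -- Part (ii): the local minimum.
    refine ⟨LS D, LS_finite D, ?_, ?_, LS_rad D hD P hPdef, ?_⟩
    · -- ncard = 5
      have n1 : ({pairF (3*D) (4*D)} : Set (Fin 2 → ℝ)).ncard = 1 := Set.ncard_singleton _
      have n2 : (insert (pairF (2*D) (3*D)) {pairF (3*D) (4*D)} : Set (Fin 2 → ℝ)).ncard = 2 := by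
        rw [Set.ncard_insert_of_notMem ?_ (Set.toFinite _), n1]
        rw [Set.mem_singleton_iff]
        intro h; obtain ⟨h1, h2⟩ := pairF_inj h; linarith
      have n3 : (insert (pairF D (2*D)) (insert (pairF (2*D) (3*D)) {pairF (3*D) (4*D)}) :
          Set (Fin 2 → ℝ)).ncard = 3 := by
        rw [Set.ncard_insert_of_notMem ?_ (Set.toFinite _), n2]
        simp only [Set.mem_insert_iff, Set.mem_singleton_iff, not_or]
        refine ⟨?_, ?_⟩ <;> (intro h; obtain ⟨h1, h2⟩ := pairF_inj h; linarith)
      have n4 : (insert (pairF 0 D) (insert (pairF D (2*D)) (insert (pairF (2*D) (3*D))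
          {pairF (3*D) (4*D)})) : Set (Fin 2 → ℝ)).ncard = 4 := by
        rw [Set.ncard_insert_of_notMem ?_ (Set.toFinite _), n3]
        simp only [Set.mem_insert_iff, Set.mem_singleton_iff, not_or]
        refine ⟨?_, ?_, ?_⟩ <;> (intro h; obtain ⟨h1, h2⟩ := pairF_inj h; linarith)
      rw [LS, Set.ncard_insert_of_notMem ?_ (Set.toFinite _), n4]
      simp only [Set.mem_insert_iff, Set.mem_singleton_iff, not_or]
      refine ⟨?_, ?_, ?_, ?_⟩ <;> (intro h; obtain ⟨h1, h2⟩ := pairF_inj h; linarith)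
    · -- trajectories and displacement
      intro τ hτ
      refine ⟨LS_traj D P hPdef τ hτ, ?_⟩
      intro i hi
      have hi0 : i = 0 := by omega
      subst hi0
      have e : (⟨0 + 1, hi⟩ : Fin 2) = 1 := rfl
      rcases LS_mem hτ with rfl|rfl|rfl|rfl|rfl <;>
        (simp only [e, Fin.mk_zero, pairF_zero, pairF_one, Real.dist_eq]
         rw [abs_le]; constructor <;> linarith)
    · -- local minimum
      intro τ hτ σ hσt hσd
      rw [LS_rad D hD P hPdef]
      have hga : σ 0 ∈ ({0, D, 2*D, 3*D, 4*D} : Finset ℝ) := by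
        have := hσt 0; rwa [hPdef] at this
      have hgb : σ 1 ∈ ({0, D, 2*D, 3*D, 4*D} : Finset ℝ) := by
        have := hσt 1; rwa [hPdef] at this
      have hd01 : dist (σ 0) (σ 1) ≤ δ := hσd 0 (by norm_num)
      have hclose := grid_near D hD _ _ hga hgb (lt_of_le_of_lt hd01 hδ₂)
      rw [Real.dist_eq, abs_le] at hclose
      obtain ⟨hc1, hc2⟩ := hclose
      have hmem' : ∀ ρ ∈ (LS D \ {τ}) ∪ {σ},
          ((ρ = pairF 0 0 ∨ ρ = pairF 0 D ∨ ρ = pairF D (2*D) ∨ ρ = pairF (2*D) (3*D) ∨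
            ρ = pairF (3*D) (4*D)) ∧ ρ ≠ τ) ∨ ρ = σ := by
        intro ρ hρ
        simp only [Set.mem_union, Set.mem_diff, Set.mem_singleton_iff] at hρ
        rcases hρ with ⟨h1, h2⟩ | h1
        · exact Or.inl ⟨LS_mem h1, h2⟩
        · exact Or.inr h1
      have key : ∃ (i : Fin 2) (p₀ : ℝ), p₀ ∈ P i ∧
          ∀ ρ ∈ (LS D \ {τ}) ∪ {σ}, ρ i ≠ p₀ := by
        rcases LS_mem hτ with rfl|rfl|rfl|rfl|rfl
        · by_cases ha4 : σ 0 = 4*D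
          · refine ⟨1, 0, by rw [hPdef, grid_mem_iff]; tauto, ?_⟩
            intro ρ hρ
            rcases hmem' ρ hρ with ⟨h5, hneρ⟩ | rfl
            · rcases h5 with rfl|rfl|rfl|rfl|rfl <;>
                first
                  | exact absurd rfl hneρ
                  | (simp only [pairF_zero, pairF_one]; intro h; linarith)
            · intro h; linarith
          · refine ⟨0, 4*D, by rw [hPdef, grid_mem_iff]; tauto, ?_⟩
            intro ρ hρ
            rcases hmem' ρ hρ with ⟨h5, hneρ⟩ | rfl
            · rcases h5 with rfl|rfl|rfl|rfl|rfl <;>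
                first
                  | exact absurd rfl hneρ
                  | (simp only [pairF_zero, pairF_one]; intro h; linarith)
            · exact ha4
        · by_cases ha4 : σ 0 = 4*D
          · refine ⟨1, D, by rw [hPdef, grid_mem_iff]; tauto, ?_⟩
            intro ρ hρ
            rcases hmem' ρ hρ with ⟨h5, hneρ⟩ | rfl
            · rcases h5 with rfl|rfl|rfl|rfl|rfl <;>
                first
                  | exact absurd rfl hneρ
                  | (simp only [pairF_zero, pairF_one]; intro h; linarith)
            · intro h; linarith
          · refine ⟨0, 4*D, by rw [hPdef, grid_mem_iff]; tauto, ?_⟩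
            intro ρ hρ
            rcases hmem' ρ hρ with ⟨h5, hneρ⟩ | rfl
            · rcases h5 with rfl|rfl|rfl|rfl|rfl <;>
                first
                  | exact absurd rfl hneρ
                  | (simp only [pairF_zero, pairF_one]; intro h; linarith)
            · exact ha4
        · by_cases ha4 : σ 0 = 4*D
          · refine ⟨0, D, by rw [hPdef, grid_mem_iff]; tauto, ?_⟩
            intro ρ hρ
            rcases hmem' ρ hρ with ⟨h5, hneρ⟩ | rfl
            · rcases h5 with rfl|rfl|rfl|rfl|rfl <;>
                first
                  | exact absurd rfl hneρ
                  | (simp only [pairF_zero, pairF_one]; intro h; linarith)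
            · intro h; linarith
          · refine ⟨0, 4*D, by rw [hPdef, grid_mem_iff]; tauto, ?_⟩
            intro ρ hρ
            rcases hmem' ρ hρ with ⟨h5, hneρ⟩ | rfl
            · rcases h5 with rfl|rfl|rfl|rfl|rfl <;>
                first
                  | exact absurd rfl hneρ
                  | (simp only [pairF_zero, pairF_one]; intro h; linarith)
            · exact ha4
        · by_cases ha4 : σ 0 = 4*D
          · refine ⟨0, 2*D, by rw [hPdef, grid_mem_iff]; tauto, ?_⟩
            intro ρ hρ
            rcases hmem' ρ hρ with ⟨h5, hneρ⟩ | rfl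
            · rcases h5 with rfl|rfl|rfl|rfl|rfl <;>
                first
                  | exact absurd rfl hneρ
                  | (simp only [pairF_zero, pairF_one]; intro h; linarith)
            · intro h; linarith
          · refine ⟨0, 4*D, by rw [hPdef, grid_mem_iff]; tauto, ?_⟩
            intro ρ hρ
            rcases hmem' ρ hρ with ⟨h5, hneρ⟩ | rfl
            · rcases h5 with rfl|rfl|rfl|rfl|rfl <;>
                first
                  | exact absurd rfl hneρ
                  | (simp only [pairF_zero, pairF_one]; intro h; linarith)
            · exact ha4
        · by_cases ha4 : σ 0 = 4*D
          · by_cases hb4 : σ 1 = 4*D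
            · refine ⟨0, 3*D, by rw [hPdef, grid_mem_iff]; tauto, ?_⟩
              intro ρ hρ
              rcases hmem' ρ hρ with ⟨h5, hneρ⟩ | rfl
              · rcases h5 with rfl|rfl|rfl|rfl|rfl <;>
                  first
                    | exact absurd rfl hneρ
                    | (simp only [pairF_zero, pairF_one]; intro h; linarith)
              · intro h; linarith
            · refine ⟨1, 4*D, by rw [hPdef, grid_mem_iff]; tauto, ?_⟩
              intro ρ hρ
              rcases hmem' ρ hρ with ⟨h5, hneρ⟩ | rfl
              · rcases h5 with rfl|rfl|rfl|rfl|rfl <;>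
                  first
                    | exact absurd rfl hneρ
                    | (simp only [pairF_zero, pairF_one]; intro h; linarith)
              · exact hb4
          · refine ⟨0, 4*D, by rw [hPdef, grid_mem_iff]; tauto, ?_⟩
            intro ρ hρ
            rcases hmem' ρ hρ with ⟨h5, hneρ⟩ | rfl
            · rcases h5 with rfl|rfl|rfl|rfl|rfl <;>
                first
                  | exact absurd rfl hneρ
                  | (simp only [pairF_zero, pairF_one]; intro h; linarith)
            · exact ha4
      obtain ⟨i, p₀, hp₀, hmiss⟩ := key
      have hC : ((LS D \ {τ}) ∪ {σ}).Nonempty := ⟨σ, Set.mem_union_right _ rfl⟩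
      have htraj' : ∀ ρ ∈ (LS D \ {τ}) ∪ {σ}, IsTrajectory P ρ := by
        intro ρ hρ
        simp only [Set.mem_union, Set.mem_diff, Set.mem_singleton_iff] at hρ
        rcases hρ with ⟨h1, _⟩ | h1
        · exact LS_traj D P hPdef ρ h1
        · subst h1; exact hσt
      exact le_trans (levelCost_ge_of_miss D hD P hPdef _ hC htraj' i p₀ hp₀ hmiss)
        (levelCost_le_rad1 P _ i)
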